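/- Let Θ₁: (0,∞) → ℝ be C¹ with Θ₁' ≥ 0, Θ₁ > 0, and u ↦ uΘ₁'(u) increasing. Define Φ(r) = ∫₀^r (r−u)·u·Θ₁'(u)² du, so Φ''(r) = rΘ₁'(r)². Then Θ₁'(r)·Φ'(r) − Θ₁(r)·Φ''(r) ≤ 0 for all r > 0, where Φ'(r) = ∫₀^r uΘ₁'(u)² du. -/

import Mathlib

open Real Set intervalIntegral

theorem theta1_phi_inequality
    (Θ₁ : ℝ → ℝ)
    (hC1 : ContDiffOn ℝ 1 Θ₁ (Set.Ioi 0))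
    (hderiv_nonneg : ∀ u ∈ Set.Ioi (0 : ℝ), 0 ≤ deriv Θ₁ u)
    (hpos : ∀ u ∈ Set.Ioi (0 : ℝ), 0 < Θ₁ u)
    (hmono : MonotoneOn (fun u : ℝ => u * deriv Θ₁ u) (Set.Ioi 0)) :
    ∀ r : ℝ, 0 < r →
      deriv Θ₁ r * (∫ u in (0 : ℝ)..r, u * (deriv Θ₁ u) ^ 2) -
        Θ₁ r * (r * (deriv Θ₁ r) ^ 2) ≤ 0 := by
  intro r hr
  have hdr : 0 ≤ deriv Θ₁ r := hderiv_nonneg r hr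
  have hΘr : 0 < Θ₁ r := hpos r hr
  have hdcont : ContinuousOn (deriv Θ₁) (Set.Ioi 0) :=
    hC1.continuousOn_deriv_of_isOpen isOpen_Ioi le_rfl
  have hdiff : DifferentiableOn ℝ Θ₁ (Set.Ioi 0) := hC1.differentiableOn one_ne_zero
  by_cases hint : IntervalIntegrable (fun u => u * (deriv Θ₁ u) ^ 2)
      MeasureTheory.volume 0 r
  · -- main case : the integral is well-defined
    have key : (∫ u in (0 : ℝ)..r, u * (deriv Θ₁ u) ^ 2) ≤ r * deriv Θ₁ r * Θ₁ r := by
      -- bound ∫_ε^r for every ε ∈ (0, r], then pass to the limit ε → 0⁺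
      have hbound : ∀ ε ∈ Set.Ioc (0 : ℝ) r,
          (∫ u in ε..r, u * (deriv Θ₁ u) ^ 2) ≤ r * deriv Θ₁ r * Θ₁ r := by
        intro ε hε
        have hεr : ε ≤ r := hε.2
        have hsub : Set.Icc ε r ⊆ Set.Ioi 0 := fun x hx => lt_of_lt_of_le hε.1 hx.1
        have hsub' : Set.uIcc ε r ⊆ Set.Ioi 0 := by
          rwa [Set.uIcc_of_le hεr]
        have hg_int : IntervalIntegrable (fun u => u * (deriv Θ₁ u) ^ 2)
            MeasureTheory.volume ε r :=
          (ContinuousOn.mul (continuousOn_id) ((hdcont.mono hsub').pow 2)).intervalIntegrable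
        have hd_int : IntervalIntegrable (deriv Θ₁) MeasureTheory.volume ε r :=
          (hdcont.mono hsub').intervalIntegrable
        have hmono_int : (∫ u in ε..r, u * (deriv Θ₁ u) ^ 2)
            ≤ ∫ u in ε..r, r * deriv Θ₁ r * deriv Θ₁ u := by
          apply intervalIntegral.integral_mono_on hεr hg_int
            (hd_int.const_mul _)
          intro u hu
          have hu0 : u ∈ Set.Ioi (0 : ℝ) := hsub hu
          have h1 : u * deriv Θ₁ u ≤ r * deriv Θ₁ r := hmono hu0 hr hu.2
          have h2 : 0 ≤ deriv Θ₁ u := hderiv_nonneg u hu0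
          calc u * (deriv Θ₁ u) ^ 2 = (u * deriv Θ₁ u) * deriv Θ₁ u := by ring
            _ ≤ (r * deriv Θ₁ r) * deriv Θ₁ u := mul_le_mul_of_nonneg_right h1 h2
        have hftc : (∫ u in ε..r, deriv Θ₁ u) = Θ₁ r - Θ₁ ε := by
          apply intervalIntegral.integral_deriv_eq_sub
          · intro x hx
            exact (hdiff x (hsub' hx)).differentiableAt (isOpen_Ioi.mem_nhds (hsub' hx))
          · exact hd_int
        have hrd : 0 ≤ r * deriv Θ₁ r := mul_nonneg hr.le hdr
        calc (∫ u in ε..r, u * (deriv Θ₁ u) ^ 2)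
            ≤ ∫ u in ε..r, r * deriv Θ₁ r * deriv Θ₁ u := hmono_int
          _ = r * deriv Θ₁ r * (Θ₁ r - Θ₁ ε) := by
              rw [intervalIntegral.integral_const_mul, hftc]
          _ ≤ r * deriv Θ₁ r * Θ₁ r := by
              have := hpos ε hε.1
              nlinarith
      -- pass to the limit
      have hicc : MeasureTheory.IntegrableOn (fun u => u * (deriv Θ₁ u) ^ 2) (Set.Icc 0 r)
          MeasureTheory.volume :=
        (intervalIntegrable_iff_integrableOn_Icc_of_le hr.le).mp hint
      have hcont : ContinuousOn (fun ε => ∫ u in ε..r, u * (deriv Θ₁ u) ^ 2)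
          (Set.uIcc 0 r) := by
        apply intervalIntegral.continuousOn_primitive_interval_left
        rwa [Set.uIcc_of_le hr.le]
      have hne : (nhdsWithin (0 : ℝ) (Set.Ioc 0 r)).NeBot := by
        apply mem_closure_iff_nhdsWithin_neBot.mp
        rw [closure_Ioc hr.ne]
        exact Set.left_mem_Icc.mpr hr.le
      have htend : Filter.Tendsto (fun ε => ∫ u in ε..r, u * (deriv Θ₁ u) ^ 2)
          (nhdsWithin (0 : ℝ) (Set.Ioc 0 r))
          (nhds (∫ u in (0 : ℝ)..r, u * (deriv Θ₁ u) ^ 2)) := by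
        have h0 : (0 : ℝ) ∈ Set.uIcc 0 r := Set.left_mem_uIcc
        have hsub2 : Set.Ioc (0:ℝ) r ⊆ Set.uIcc 0 r := by
          rw [Set.uIcc_of_le hr.le]
          exact Set.Ioc_subset_Icc_self
        have h3 : Filter.Tendsto (fun ε => ∫ u in ε..r, u * (deriv Θ₁ u) ^ 2)
            (nhdsWithin (0 : ℝ) (Set.Ioc 0 r))
            (nhds (∫ u in (0:ℝ)..r, u * (deriv Θ₁ u) ^ 2)) :=
          (hcont 0 h0).mono_left (nhdsWithin_mono 0 hsub2)
        exact h3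
      exact le_of_tendsto htend (Filter.eventually_iff_exists_mem.mpr
        ⟨Set.Ioc 0 r, self_mem_nhdsWithin, hbound⟩)
    nlinarith [mul_le_mul_of_nonneg_left key hdr]
  · -- degenerate case : the integral is 0 by convention
    rw [intervalIntegral.integral_undef hint]
    nlinarith [mul_nonneg (mul_nonneg hΘr.le hr.le) (sq_nonneg (deriv Θ₁ r))]
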